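/- For real c > 0 and x > 0, the Mellin inversion formula (1/2πi)∫_{(c)} Γ(s/2)·x^(−s/2) ds = 2e^(−x) holds. -/

import Mathlib

open Complex Real MeasureTheory Set

lemma norm_Gamma_le_Gamma_re {s : ℂ} (hs : 0 < s.re) :
    ‖Complex.Gamma s‖ ≤ Real.Gamma s.re := by
  rw [Complex.Gamma_eq_integral hs, Complex.GammaIntegral, Real.Gamma_eq_integral hs]
  refine (norm_integral_le_integral_norm _).trans_eq ?_
  refine setIntegral_congr_fun measurableSet_Ioi fun t ht => ?_
  rw [norm_mul, Complex.norm_real, Real.norm_eq_abs,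
    norm_cpow_eq_rpow_re_of_pos ht, _root_.abs_of_nonneg (Real.exp_pos _).le]
  simp

lemma gamma_vertical_integrable (c : ℝ) (hc : 0 < c) :
    MeasureTheory.Integrable (fun t : ℝ => Complex.Gamma ((c + t * I) / 2)) := by
  have hcont : Continuous (fun t : ℝ => Complex.Gamma ((c + t * I) / 2)) := by
    rw [continuous_iff_continuousAt]
    intro t
    refine (Complex.differentiableAt_Gamma _ fun m => ?_).continuousAt.comp (by fun_prop)
    intro h
    have : (((c : ℂ) + t * I) / 2).re = (-(m : ℂ)).re := by rw [h]
    simp only [Complex.add_re, Complex.div_re] at this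
    have hre : (((c : ℂ) + t * I) / 2).re = c / 2 := by
      simp [Complex.div_re, Complex.add_re, Complex.mul_re]
    rw [h] at hre
    simp only [Complex.neg_re, Complex.natCast_re] at hre
    have : (0:ℝ) < c / 2 := by linarith
    rw [← hre] at this
    have : (0:ℝ) ≤ (m : ℝ) := Nat.cast_nonneg m
    linarith
  set C : ℝ := Real.Gamma (c / 2 + 2)
  have key : ∀ t : ℝ, ‖Complex.Gamma ((c + t * I) / 2)‖ ≤
      (2 * C / min (c/2) 1) * (1 + (t/2)^2)⁻¹ := by
    intro t
    set s : ℂ := ((c : ℂ) + t * I) / 2 with hs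
    have hsre : s.re = c / 2 := by simp [hs, Complex.div_re, Complex.add_re, Complex.mul_re]
    have hsim : s.im = t / 2 := by simp [hs, Complex.div_im, Complex.add_im, Complex.mul_im]
    have hs0 : s ≠ 0 := fun h => by simp [h] at hsre; linarith
    have hs1 : s + 1 ≠ 0 := fun h => by
      have : (s + 1).re = 0 := by rw [h]; simp
      rw [Complex.add_re, hsre, Complex.one_re] at this; linarith
    have hrec : Complex.Gamma s = Complex.Gamma (s + 2) / (s * (s + 1)) := by
      have h1 : Complex.Gamma (s + 1) = s * Complex.Gamma s := Complex.Gamma_add_one s hs0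
      have h2 : Complex.Gamma (s + 1 + 1) = (s + 1) * Complex.Gamma (s + 1) :=
        Complex.Gamma_add_one (s + 1) hs1
      rw [show s + 2 = s + 1 + 1 by ring, h2, h1]
      field_simp
    rw [hrec]
    have hnum : ‖Complex.Gamma (s + 2)‖ ≤ C := by
      have : (s + 2).re = c / 2 + 2 := by rw [Complex.add_re, hsre]; norm_num
      have := norm_Gamma_le_Gamma_re (s := s + 2) (by rw [this]; linarith)
      rwa [‹(s + 2).re = _›] at this
    have hprod : min (c/2) 1 / 2 * (1 + (t/2)^2) ≤ ‖s‖ * ‖s + 1‖ := by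
      have h1 : c / 2 ≤ ‖s‖ := by
        calc c / 2 = s.re := hsre.symm
        _ ≤ |s.re| := le_abs_self _
        _ ≤ ‖s‖ := Complex.abs_re_le_norm s
      have h2 : |t/2| ≤ ‖s‖ := by
        calc |t/2| = |s.im| := by rw [hsim]
        _ ≤ ‖s‖ := Complex.abs_im_le_norm s
      have h3 : (1:ℝ) ≤ ‖s + 1‖ := by
        have : (s+1).re = c/2 + 1 := by rw [Complex.add_re, hsre, Complex.one_re]
        calc (1:ℝ) ≤ c/2 + 1 := by linarith
        _ = (s+1).re := this.symm
        _ ≤ |(s+1).re| := le_abs_self _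
        _ ≤ ‖s + 1‖ := Complex.abs_re_le_norm _
      have h4 : |t/2| ≤ ‖s + 1‖ := by
        have : (s+1).im = t/2 := by rw [Complex.add_im, hsim, Complex.one_im, add_zero]
        calc |t/2| = |(s+1).im| := by rw [this]
        _ ≤ ‖s + 1‖ := Complex.abs_im_le_norm _
      have hs_pos : (0:ℝ) ≤ ‖s‖ := norm_nonneg _
      have hsq : (t/2)^2 ≤ ‖s‖ * ‖s + 1‖ := by
        calc (t/2)^2 = |t/2| * |t/2| := by rw [← abs_mul, ← sq, abs_sq]
        _ ≤ ‖s‖ * ‖s + 1‖ := mul_le_mul h2 h4 (abs_nonneg _) hs_pos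
      have hone : min (c/2) 1 ≤ ‖s‖ * ‖s + 1‖ := by
        calc min (c/2) 1 = min (c/2) 1 * 1 := (mul_one _).symm
        _ ≤ (c/2) * 1 := by nlinarith [min_le_left (c/2) (1:ℝ)]
        _ ≤ ‖s‖ * ‖s + 1‖ := mul_le_mul h1 h3 zero_le_one hs_pos
      have hmin : min (c/2) 1 ≤ 1 := min_le_right _ _
      nlinarith [min_le_left (c/2) (1:ℝ), lt_min (half_pos hc) one_pos, sq_nonneg (t/2)]
    rw [norm_div, norm_mul]
    have hCpos : 0 < C := Real.Gamma_pos_of_pos (by linarith)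
    have hmin_pos : 0 < min (c/2) 1 := lt_min (by linarith) one_pos
    have hq : 0 < 1 + (t/2)^2 := by positivity
    have hden_pos : 0 < ‖s‖ * ‖s + 1‖ :=
      lt_of_lt_of_le (by positivity) hprod
    rw [div_le_iff₀ hden_pos]
    calc ‖Complex.Gamma (s + 2)‖ ≤ C := hnum
    _ = (2 * C / min (c/2) 1) * (1 + (t/2)^2)⁻¹ * (min (c/2) 1 / 2 * (1 + (t/2)^2)) := by
        field_simp
    _ ≤ (2 * C / min (c/2) 1) * (1 + (t/2)^2)⁻¹ * (‖s‖ * ‖s + 1‖) := by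
        refine mul_le_mul_of_nonneg_left hprod (by positivity)
  have hint : MeasureTheory.Integrable
      (fun t : ℝ => (2 * C / min (c/2) 1) * (1 + (t/2)^2)⁻¹) :=
    (integrable_inv_one_add_sq.comp_div (two_ne_zero)).const_mul _
  exact hint.mono' hcont.aestronglyMeasurable (Filter.Eventually.of_forall key)

theorem mellin_inversion_gamma (c x : ℝ) (hc : 0 < c) (hx : 0 < x) :
    (1 / (2 * π)) * ∫ t : ℝ,
        Complex.Gamma ((c + t * I) / 2) * (x : ℂ) ^ (-(c + t * I) / 2) =
      2 * Real.exp (-x) := by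
  set f : ℝ → ℂ := fun t => 2 * Real.exp (-(t ^ (2:ℝ))) with hf_def
  -- mellin f s = Gamma (s/2) for 0 < re s
  have hmell : ∀ s : ℂ, 0 < s.re → mellin f s = Complex.Gamma (s / 2) := by
    intro s hs
    have h0 := mellin_comp_rpow (fun u : ℝ => (2 : ℂ) * Real.exp (-u)) s 2
    beta_reduce at h0
    rw [hf_def, h0]
    have h2 : mellin (fun u : ℝ => (2 : ℂ) * Real.exp (-u)) (s / (2:ℝ)) =
        2 * mellin (fun u : ℝ => (Real.exp (-u) : ℂ)) (s / (2:ℝ)) := by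
      have h3 := mellin_const_smul (𝕜 := ℂ) (fun u : ℝ => (Real.exp (-u) : ℂ)) (s / (2:ℝ)) (2:ℂ)
      rw [smul_eq_mul] at h3
      rw [← h3]
      simp only [smul_eq_mul]
    rw [h2, ← Complex.GammaIntegral_eq_mellin, ← Complex.Gamma_eq_integral]
    · rw [show ((2:ℝ):ℂ) = (2:ℂ) from Complex.ofReal_ofNat 2]
      rw [show |(2:ℝ)| = 2 from abs_of_pos two_pos, real_smul]
      push_cast
      ring
    · rw [show ((2:ℝ):ℂ) = (2:ℂ) from Complex.ofReal_ofNat 2] at *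
      rw [Complex.div_ofNat_re]
      positivity
  have hsx : (0:ℝ) < Real.sqrt x := Real.sqrt_pos.mpr hx
  -- Mellin convergence of f at c
  have hfconv : MellinConvergent f c := by
    have hbase : MellinConvergent (fun u : ℝ => (2 : ℂ) * Real.exp (-u)) ((c:ℂ) / (2:ℝ)) := by
      have hre : (0:ℝ) < ((c:ℂ) / (2:ℝ)).re := by
        rw [Complex.div_ofReal_re]
        simp only [Complex.ofReal_re]
        positivity
      have h1 := (Complex.GammaIntegral_convergent hre).const_mul (2:ℂ)
      refine MeasureTheory.IntegrableOn.congr_fun h1 (fun t ht => ?_) measurableSet_Ioi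
      show 2 * (↑(Real.exp (-t)) * (t:ℂ) ^ ((c:ℂ)/(2:ℝ) - 1)) =
        (t:ℂ) ^ ((c:ℂ)/(2:ℝ) - 1) • ((2:ℂ) * Real.exp (-t))
      rw [smul_eq_mul]
      ring
    exact (MellinConvergent.comp_rpow (f := fun u : ℝ => (2 : ℂ) * Real.exp (-u))
      (s := (c:ℂ)) two_ne_zero).mpr hbase
  -- vertical integrability
  have hFf : Complex.VerticalIntegrable (mellin f) c := by
    refine (gamma_vertical_integrable c hc).congr ?_
    filter_upwards with t
    rw [hmell ((c:ℂ) + t * I) (by simp [hc])]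
  -- continuity
  have hfx : ContinuousAt f (Real.sqrt x) := by
    refine ContinuousAt.mul continuousAt_const ?_
    refine Complex.continuous_ofReal.continuousAt.comp ?_
    refine (Real.continuous_exp.continuousAt).comp ?_
    refine ContinuousAt.neg ?_
    exact Real.continuousAt_rpow_const _ _ (Or.inl hsx.ne')
  have hinv := mellinInv_mellin_eq c f hsx hfconv hFf hfx
  have hpow : ∀ y : ℝ, ((Real.sqrt x : ℝ) : ℂ) ^ (-((c:ℂ) + y * I)) =
      (x : ℂ) ^ (-((c:ℂ) + y * I) / 2) := by
    intro y
    rw [Real.sqrt_eq_rpow, ← Complex.cpow_mul_ofReal_nonneg hx.le]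
    congr 1
    push_cast
    ring
  calc (1 / (2 * (π:ℂ))) * ∫ t : ℝ,
        Complex.Gamma (((c:ℂ) + t * I) / 2) * (x : ℂ) ^ (-((c:ℂ) + t * I) / 2)
      = mellinInv c (mellin f) (Real.sqrt x) := by
        rw [mellinInv, real_smul]
        congr 1
        · push_cast; ring
        · congr 1
          funext y
          rw [smul_eq_mul, hmell ((c:ℂ) + y * I) (by simp [hc]), hpow y, mul_comm]
    _ = f (Real.sqrt x) := hinv
    _ = 2 * Real.exp (-x) := by
        rw [hf_def]
        beta_reduce
        rw [Real.rpow_two, Real.sq_sqrt hx.le]
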